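/- Let n, m be positive integers, let f : ℝⁿ → ℝⁿ, g : ℝⁿ → (ℝᵐ →L[ℝ] ℝⁿ), and u : ℝⁿ → ℝᵐ be arbitrary maps, let h : ℝⁿ → ℝ be differentiable, and let α : ℝ → ℝ be an extended class K function. Suppose that for every z ∈ ℝⁿ, ⟪∇h(z), f(z) + g(z)(u(z))⟫ ≥ -α(h(z)). Then every differentiable curve x : ℝ → ℝⁿ satisfying x'(t) = f(x(t)) + g(x(t))(u(x(t))) for all t ≥ 0 and h(x(0)) ≥ 0 satisfies h(x(t)) ≥ 0 for all t ≥ 0; that is, the safe set S = {z ∈ ℝⁿ : h(z) ≥ 0} is forward invariant along the trajectory. -/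

import Mathlib

open Real Set

/-- Forward invariance of the safe set (Theorem 2): if `h` is a differentiable
zeroing control barrier function, i.e. `⟪∇h(z), f(z) + g(z)(u(z))⟫ ≥ -α(h(z))`
for an extended class K function `α`, then along any solution of
`ẋ = f(x) + g(x) u(x)` starting in `S = {z | h z ≥ 0}`, the state remains in `S`. -/
theorem cbf_forward_invariance
    (n m : ℕ) (hn : 0 < n) (hm : 0 < m)
    (f : EuclideanSpace ℝ (Fin n) → EuclideanSpace ℝ (Fin n))
    (g : EuclideanSpace ℝ (Fin n) → (EuclideanSpace ℝ (Fin m) →L[ℝ] EuclideanSpace ℝ (Fin n)))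
    (u : EuclideanSpace ℝ (Fin n) → EuclideanSpace ℝ (Fin m))
    (h : EuclideanSpace ℝ (Fin n) → ℝ) (hhdiff : Differentiable ℝ h)
    (α : ℝ → ℝ) (hαcont : Continuous α) (hαmono : StrictMono α) (hα0 : α 0 = 0)
    (hcbf : ∀ z : EuclideanSpace ℝ (Fin n),
      (inner ℝ (gradient h z) (f z + g z (u z)) : ℝ) ≥ -α (h z))
    (x : ℝ → EuclideanSpace ℝ (Fin n)) (hx : Differentiable ℝ x)
    (hode : ∀ t : ℝ, 0 ≤ t → deriv x t = f (x t) + g (x t) (u (x t)))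
    (hinit : h (x 0) ≥ 0) :
    ∀ t : ℝ, 0 ≤ t → h (x t) ≥ 0 := by
  set φ : ℝ → ℝ := fun t => h (x t) with hφ
  have hφdiff : Differentiable ℝ φ := hhdiff.comp hx
  have hφderiv : ∀ t : ℝ, HasDerivAt φ ((inner ℝ (gradient h (x t)) (deriv x t) : ℝ)) t := by
    intro t
    have h1 := ((hhdiff (x t)).hasGradientAt.hasFDerivAt).comp_hasDerivAt t (hx t).hasDerivAt
    rw [← InnerProductSpace.toDual_apply_apply]
    exact h1
  -- key: wherever t ≥ 0 and φ t ≤ 0, deriv φ t ≥ 0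
  have key : ∀ t : ℝ, 0 ≤ t → φ t ≤ 0 → 0 ≤ deriv φ t := by
    intro t ht hφt
    have hd : deriv φ t = (inner ℝ (gradient h (x t)) (deriv x t) : ℝ) := (hφderiv t).deriv
    rw [hd, hode t ht]
    have hα : α (φ t) ≤ 0 := by
      rcases eq_or_lt_of_le hφt with h' | h'
      · rw [h', hα0]
      · exact le_of_lt (by simpa [hα0] using hαmono h')
    have := hcbf (x t)
    linarith
  intro t ht
  by_contra hneg
  push_neg at hneg
  have ht0 : 0 < t := by
    rcases eq_or_lt_of_le ht with h' | h'
    · exfalso; rw [← h'] at hneg; linarith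
    · exact h'
  set A : Set ℝ := {s | s ∈ Icc (0:ℝ) t ∧ 0 ≤ φ s} with hA
  have hAne : A.Nonempty := ⟨0, ⟨le_refl 0, le_of_lt ht0⟩, hinit⟩
  have hAbdd : BddAbove A := ⟨t, fun s hs => hs.1.2⟩
  have hAclosed : IsClosed A := by
    have : A = Icc 0 t ∩ φ ⁻¹' (Ici 0) := by
      ext s; simp [hA, Set.mem_inter_iff, And.comm]
    rw [this]
    exact isClosed_Icc.inter (isClosed_Ici.preimage hφdiff.continuous)
  set s₀ : ℝ := sSup A with hs₀
  have hs₀mem : s₀ ∈ A := hAclosed.csSup_mem hAne hAbdd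
  have hs₀0 : 0 ≤ s₀ := hs₀mem.1.1
  have hs₀t : s₀ < t := by
    rcases eq_or_lt_of_le hs₀mem.1.2 with h' | h'
    · exfalso; have := hs₀mem.2; rw [h'] at this; linarith
    · exact h'
  have hlt : ∀ s ∈ Ioc s₀ t, φ s < 0 := by
    intro s hs
    by_contra hc
    push_neg at hc
    have : s ∈ A := ⟨⟨le_trans hs₀0 hs.1.le, hs.2⟩, hc⟩
    exact absurd (le_csSup hAbdd this) (not_le.mpr hs.1)
  have hmono : MonotoneOn φ (Icc s₀ t) := by
    apply monotoneOn_of_deriv_nonneg (convex_Icc s₀ t) hφdiff.continuous.continuousOn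
      (fun s _ => (hφdiff s).differentiableWithinAt)
    intro s hs
    rw [interior_Icc] at hs
    exact key s (le_trans hs₀0 hs.1.le) (hlt s ⟨hs.1, hs.2.le⟩).le
  have := hmono ⟨le_refl s₀, hs₀t.le⟩ ⟨hs₀t.le, le_refl t⟩ hs₀t.le
  have h2 := hs₀mem.2
  linarith
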